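/- Let n > 3 be odd and let m be an integer with 1 < m < n, gcd(m, n) = 1 and gcd(m − 1, n) = 1. Then L_n(m) is left alternative — equivalently, m·(m·y − (m−1)·x) − (m−1)·x ≡ y (mod n) for all distinct residues x, y modulo n — if and only if m = n − 1. Moreover m = n − 1 satisfies gcd(n−1, n) = 1 and gcd(n−2, n) = 1 (n being odd), so the class L_n contains exactly one left alternative loop, namely L_n(n−1). -/
import Mathlib


/-- `Lₙ` contains exactly one left alternative loop, namely `Lₙ(n-1)`. -/
theorem stmt_5 (n : ℕ) (hn : 3 < n) (hodd : Odd n) :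
    (1 < n - 1 ∧ n - 1 < n ∧ Nat.gcd (n - 1) n = 1 ∧ Nat.gcd (n - 2) n = 1) ∧
    ∀ m : ℕ, 1 < m → m < n → Nat.gcd m n = 1 → Nat.gcd (m - 1) n = 1 →
      ((∀ x y : ZMod n, x ≠ y →
          (m : ZMod n) * ((m : ZMod n) * y - ((m : ZMod n) - 1) * x)
              - ((m : ZMod n) - 1) * x
            = y)
        ↔ m = n - 1) := by
  constructor
  · refine ⟨by omega, by omega, ?_, ?_⟩
    · have h1 : n - 1 + 1 = n := by omega
      calc Nat.gcd (n - 1) n = Nat.gcd (n - 1) (n - 1 + 1) := by rw [h1]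
        _ = Nat.gcd (n - 1) 1 := Nat.gcd_self_add_right _ _
        _ = 1 := Nat.gcd_one_right _
    · have h2 : n - 2 + 2 = n := by omega
      have hodd2 : Odd (n - 2) := by
        obtain ⟨k, hk⟩ := hodd
        exact ⟨k - 1, by omega⟩
      have : Nat.Coprime (n - 2) 2 := Nat.coprime_two_right.mpr hodd2
      calc Nat.gcd (n - 2) n = Nat.gcd (n - 2) (n - 2 + 2) := by rw [h2]
        _ = Nat.gcd (n - 2) 2 := Nat.gcd_self_add_right _ _
        _ = 1 := this
  · intro m hm1 hmn hg1 hg2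
    haveI : Fact (1 < n) := ⟨by omega⟩
    constructor
    · intro h
      have key := h 0 1 zero_ne_one
      simp only [mul_one, mul_zero, sub_zero] at key
      have hmm : (m : ZMod n) * m = 1 := key
      have hd : (n : ℤ) ∣ (m : ℤ) * m - 1 := by
        have h0 : (((m : ℤ) * m - 1 : ℤ) : ZMod n) = 0 := by
          push_cast
          rw [hmm]
          ring
        exact (ZMod.intCast_zmod_eq_zero_iff_dvd _ n).mp h0
      have hd2 : (n : ℤ) ∣ ((m : ℤ) - 1) * ((m : ℤ) + 1) := by
        rw [show ((m : ℤ) - 1) * ((m : ℤ) + 1) = (m : ℤ) * m - 1 from by ring]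
        exact hd
      have hc : IsCoprime ((m : ℤ) - 1) (n : ℤ) := by
        have h3 := Nat.isCoprime_iff_coprime.mpr hg2
        have hcast : ((m - 1 : ℕ) : ℤ) = (m : ℤ) - 1 := by omega
        rwa [hcast] at h3
      have hdn : (n : ℤ) ∣ (m : ℤ) + 1 := hc.symm.dvd_of_dvd_mul_left hd2
      have hdnn : n ∣ m + 1 := by exact_mod_cast hdn
      have := Nat.le_of_dvd (by omega) hdnn
      have : m + 1 = n := by
        rcases hdnn with ⟨c, hc'⟩
        rcases Nat.lt_or_ge c 2 with h' | h'
        · interval_cases c <;> omega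
        · nlinarith
      omega
    · intro hm
      have hmval : (m : ZMod n) = -1 := by
        rw [hm]
        have : ((n - 1 : ℕ) : ZMod n) = (n : ZMod n) - 1 := by
          push_cast [Nat.cast_sub (by omega : 1 ≤ n)]
          ring
        rw [this, ZMod.natCast_self]
        ring
      intro x y hxy
      rw [hmval]
      ring
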